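/- Let A, B, Ā, B̄, γ̄, f̄ : ℝ → ℝ be differentiable, with A(f̄(φ)) = exp(-2γ̄(φ))·Ā(φ) and B(f̄(φ)) = exp(-2γ̄(φ))·(f̄'(φ))⁻²·(B̄(φ) - 6 γ̄'(φ)² Ā(φ) + 6 γ̄'(φ) Ā'(φ)) for all φ, where f̄'(φ) ≠ 0. Then the integrand of I₃ is invariant up to the Jacobian of the field redefinition: for all φ, (2·A(f̄(φ))·B(f̄(φ)) + 3·(A'(f̄(φ)))²)/(4·A(f̄(φ))²) · (f̄'(φ))² = (2·Ā(φ)·B̄(φ) + 3·(Ā'(φ))²)/(4·Ā(φ)²), provided Ā(φ) ≠ 0. -/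

import Mathlib

theorem stmt_2 (A B Abar Bbar gb fb : ℝ → ℝ)
    (hAd : Differentiable ℝ A) (hBd : Differentiable ℝ B)
    (hAbd : Differentiable ℝ Abar) (hBbd : Differentiable ℝ Bbar)
    (hgd : Differentiable ℝ gb) (hfd : Differentiable ℝ fb)
    (hA : ∀ φ, A (fb φ) = Real.exp (-2 * gb φ) * Abar φ)
    (hB : ∀ φ, B (fb φ) = Real.exp (-2 * gb φ) * (deriv fb φ)⁻¹ ^ 2 *
      (Bbar φ - 6 * (deriv gb φ) ^ 2 * Abar φ + 6 * deriv gb φ * deriv Abar φ))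
    (hfp : ∀ φ, deriv fb φ ≠ 0) :
    ∀ φ, Abar φ ≠ 0 →
      (2 * A (fb φ) * B (fb φ) + 3 * (deriv A (fb φ)) ^ 2) / (4 * (A (fb φ)) ^ 2)
        * (deriv fb φ) ^ 2
      = (2 * Abar φ * Bbar φ + 3 * (deriv Abar φ) ^ 2) / (4 * (Abar φ) ^ 2) := by
  intro φ hAb
  have hfφ := hfp φ
  have hc : deriv (A ∘ fb) φ = deriv A (fb φ) * deriv fb φ :=
    deriv_comp φ (hAd (fb φ)) (hfd φ)
  have heq : (A ∘ fb) = fun φ => Real.exp (-2 * gb φ) * Abar φ := funext hA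
  have h1 : HasDerivAt (fun φ => Real.exp (-2 * gb φ))
      (Real.exp (-2 * gb φ) * (-2 * deriv gb φ)) φ := by
    simpa using ((hgd φ).hasDerivAt.const_mul (-2)).exp
  have hd2 : deriv (fun φ => Real.exp (-2 * gb φ) * Abar φ) φ =
      Real.exp (-2 * gb φ) * (-2 * deriv gb φ) * Abar φ +
        Real.exp (-2 * gb φ) * deriv Abar φ := by
    exact (h1.mul (hAbd φ).hasDerivAt).deriv
  have key : deriv A (fb φ) * deriv fb φ =
      Real.exp (-2 * gb φ) * (deriv Abar φ - 2 * deriv gb φ * Abar φ) := by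
    rw [← hc, heq, hd2]; ring
  have hd : deriv A (fb φ) =
      Real.exp (-2 * gb φ) * (deriv Abar φ - 2 * deriv gb φ * Abar φ) / deriv fb φ :=
    (eq_div_iff hfφ).mpr key
  have hexp := Real.exp_ne_zero (-2 * gb φ)
  rw [hA, hB, hd]
  field_simp
  ring
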